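/- Let X₁, …, X_d be nonnegative random variables with common distribution G ∈ 𝒮* that are LWQD: there exist constants gₙ > 0 and x₀ > 0 such that P[Σ_{j<n} X_j > x | Xₙ > y] ≤ g_{n−1} P[Σ_{j<n} X_j > x] uniformly for n = 2,…,d and x,y ≥ x₀. Then for A₁' = {x : Σᵢ (1/d)xᵢ > c} (c > 0) the distribution F of (X₁,…,X_d) satisfies F ∈ 𝒮*_{A₁'}: indeed P[(c/d)Σ_j X_j > x] ∼ d·Ḡ'(x) where G' is the distribution of (c/d)X₁, and G' ∈ 𝒮* implies F_{A₁'} ∈ 𝒮*. -/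

import Mathlib

open MeasureTheory ProbabilityTheory Filter Set Pointwise Asymptotics

/-- A set `A ⊆ ℝ^d` is increasing if `x ∈ A` and `y ≥ 0` componentwise imply `x + y ∈ A`. -/
def IncreasingSet {d : ℕ} (A : Set (Fin d → ℝ)) : Prop :=
  ∀ x ∈ A, ∀ y : Fin d → ℝ, (∀ i, 0 ≤ y i) → x + y ∈ A

/-- The family 𝓡 of open increasing sets with convex complement and `0 ∉ closure A`. -/
def MemR {d : ℕ} (A : Set (Fin d → ℝ)) : Prop :=
  IsOpen A ∧ IncreasingSet A ∧ Convex ℝ Aᶜ ∧ (0 : Fin d → ℝ) ∉ closure A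

/-- `P[X ∈ x·A]`. -/
noncomputable def probIn {d : ℕ} {Ω : Type*} [MeasurableSpace Ω] (P : Measure Ω)
    (X : Ω → (Fin d → ℝ)) (A : Set (Fin d → ℝ)) (x : ℝ) : ℝ :=
  (P {ω | X ω ∈ x • A}).toReal

/-- `Y_A = sup{u > 0 : X ∈ u·A}`. -/
noncomputable def YA {d : ℕ} {Ω : Type*} (X : Ω → (Fin d → ℝ)) (A : Set (Fin d → ℝ))
    (ω : Ω) : ℝ :=
  sSup {u : ℝ | 0 < u ∧ X ω ∈ u • A}

/-- The tail of the distribution `F_A` of `Y_A`. -/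
noncomputable def tailYA {d : ℕ} {Ω : Type*} [MeasurableSpace Ω] (P : Measure Ω)
    (X : Ω → (Fin d → ℝ)) (A : Set (Fin d → ℝ)) (x : ℝ) : ℝ :=
  (P {ω | x < YA X A ω}).toReal

/-- A (positive) tail function is long-tailed: `T(x−a)/T(x) → 1` for every `a > 0`. -/
def LongTailedFun (T : ℝ → ℝ) : Prop :=
  (∀ x, 0 < T x) ∧ ∀ a > 0, Tendsto (fun x => T (x - a) / T x) atTop (nhds 1)

/-- The mean `μ_V = ∫₀^∞ V̄(y) dy` computed from the tail function. -/
noncomputable def tailMean (T : ℝ → ℝ) : ℝ := ∫ y in Ioi (0 : ℝ), T y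

/-- Strong subexponentiality (class 𝒮*) of a tail function:
`∫₀^x T(x−y)T(y) dy ∼ 2 μ T(x)`, with `μ = ∫₀^∞ T < ∞` and `T > 0`. -/
def StrongSubexpFun (T : ℝ → ℝ) : Prop :=
  (∀ x, 0 < T x) ∧ IntegrableOn T (Ioi 0) volume ∧
    Tendsto (fun x => (∫ y in (0 : ℝ)..x, T (x - y) * T y) / T x) atTop
      (nhds (2 * tailMean T))

/-- `V̄_u(x) = min(1, ∫_x^{x+u} V̄(y) dy)`. -/
noncomputable def tailU (T : ℝ → ℝ) (u x : ℝ) : ℝ := min 1 (∫ y in x..(x + u), T y)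

/-- Strongly subexponential (class 𝒮_*): `V̄_u^{2*}(x)/V̄_u(x) → 2` uniformly in `u ∈ [1,∞)`,
where `V̄_u^{2*}` is the tail of the sum of two independent random variables with tail `V̄_u`. -/
def StronglySubexpFun (T : ℝ → ℝ) : Prop :=
  (∀ x, 0 < T x) ∧ IntegrableOn T (Ioi 0) volume ∧
    ∀ ε > (0 : ℝ), ∃ x₀ : ℝ, ∀ u ≥ (1 : ℝ), ∀ x ≥ x₀,
      ∀ (Ω' : Type) (_ : MeasurableSpace Ω') (Q : Measure Ω'), IsProbabilityMeasure Q →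
        ∀ Z₁ Z₂ : Ω' → ℝ, Measurable Z₁ → Measurable Z₂ → IndepFun Z₁ Z₂ Q →
          (∀ z, (Q {ω | z < Z₁ ω}).toReal = tailU T u z) →
          (∀ z, (Q {ω | z < Z₂ ω}).toReal = tailU T u z) →
          |(Q {ω | x < Z₁ ω + Z₂ ω}).toReal / tailU T u x - 2| < ε

/-- Insensitivity function of a tail function. -/
def Insensitivity (T : ℝ → ℝ) (h : ℝ → ℝ) : Prop :=
  (∀ x, 0 < h x) ∧ Tendsto h atTop atTop ∧ Tendsto (fun x => h x / x) atTop (nhds 0) ∧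
    Tendsto (fun x => T (x - h x) / T x) atTop (nhds 1) ∧
    Tendsto (fun x => T (x + h x) / T x) atTop (nhds 1)

/-- Generalized inverse of `h`. -/
noncomputable def geninv (h : ℝ → ℝ) (y : ℝ) : ℝ := sInf {x | 0 ≤ x ∧ y ≤ h x}

section TailAnalytic

variable {T : ℝ → ℝ}

lemma conv_ii (hA : Antitone T) (hpos : ∀ x, 0 < T x) (x a b : ℝ) :
    IntervalIntegrable (fun y => T (x - y) * T y) volume a b := by
  rw [intervalIntegrable_iff]
  refine Integrable.mono' (g := fun _ => T (x - (a ⊔ b)) * T (a ⊓ b))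
    (integrableOn_const measure_Ioc_lt_top.ne) ?_ ?_
  · exact (((hA.measurable).comp (measurable_const.sub measurable_id)).mul
      hA.measurable).aestronglyMeasurable
  · filter_upwards [ae_restrict_mem measurableSet_uIoc] with y hy
    rcases hy with ⟨h1, h2⟩
    have hb1 : T (x - y) ≤ T (x - (a ⊔ b)) := hA (by linarith)
    have hb2 : T y ≤ T (a ⊓ b) := hA h1.le
    rw [Real.norm_eq_abs, abs_of_pos (mul_pos (hpos _) (hpos _))]
    exact mul_le_mul hb1 hb2 (hpos _).le (hpos _).le

lemma conv_sym (x s : ℝ) :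
    (∫ y in (x - s)..x, T (x - y) * T y) = ∫ y in (0:ℝ)..s, T (x - y) * T y := by
  have h := intervalIntegral.integral_comp_sub_left (a := (0:ℝ)) (b := s)
    (fun u => T u * T (x - u)) x
  simp only [sub_zero] at h
  calc (∫ y in (x - s)..x, T (x - y) * T y)
      = ∫ u in (x - s)..x, T u * T (x - u) := by
        refine intervalIntegral.integral_congr fun u _ => mul_comm _ _
    _ = ∫ y in (0:ℝ)..s, T (x - y) * T (x - (x - y)) := h.symm
    _ = ∫ y in (0:ℝ)..s, T (x - y) * T y := by
        refine intervalIntegral.integral_congr fun y _ => by rw [sub_sub_cancel]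

lemma conv_split (hA : Antitone T) (hpos : ∀ x, 0 < T x) (x s : ℝ) :
    (∫ y in (0:ℝ)..x, T (x - y) * T y) =
      2 * (∫ y in (0:ℝ)..s, T (x - y) * T y) + ∫ y in s..(x - s), T (x - y) * T y := by
  have h1 := intervalIntegral.integral_add_adjacent_intervals
    (conv_ii hA hpos x 0 s) (conv_ii hA hpos x s (x - s))
  have h2 := intervalIntegral.integral_add_adjacent_intervals
    (conv_ii hA hpos x 0 (x - s)) (conv_ii hA hpos x (x - s) x)
  rw [conv_sym x s] at h2
  rw [← h2, ← h1]; ring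

lemma tendsto_int_T (hint : IntegrableOn T (Ioi 0) volume) :
    Tendsto (fun s => ∫ y in (0:ℝ)..s, T y) atTop (nhds (tailMean T)) :=
  intervalIntegral_tendsto_integral_Ioi 0 hint tendsto_id

lemma int_le_mean (hA : Antitone T) (hpos : ∀ x, 0 < T x)
    (hint : IntegrableOn T (Ioi 0) volume) (s : ℝ) :
    (∫ y in (0:ℝ)..s, T y) ≤ tailMean T := by
  rcases le_or_gt s 0 with h | h
  · rw [intervalIntegral.integral_of_ge h]
    have h1 : 0 ≤ ∫ y in Ioc s 0, T y :=
      setIntegral_nonneg measurableSet_Ioc fun y _ => (hpos y).le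
    have h2 : 0 ≤ tailMean T :=
      setIntegral_nonneg measurableSet_Ioi fun y _ => (hpos y).le
    linarith
  · rw [intervalIntegral.integral_of_le h.le]
    exact setIntegral_mono_set hint
      (Eventually.of_forall fun y => (hpos y).le)
      (HasSubset.Subset.eventuallyLE Ioc_subset_Ioi_self)

/-- long-tailedness, for `a ≥ 0`, from the 𝒮* limit -/
lemma longtailed (hA : Antitone T) (hpos : ∀ x, 0 < T x)
    (hint : IntegrableOn T (Ioi 0) volume)
    (hS : Tendsto (fun x => (∫ y in (0:ℝ)..x, T (x - y) * T y) / T x) atTop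
      (nhds (2 * tailMean T)))
    {a : ℝ} (ha : 0 ≤ a) :
    Tendsto (fun x => T (x - a) / T x) atTop (nhds 1) := by
  rcases eq_or_lt_of_le ha with rfl | ha
  · refine Tendsto.congr (fun x => ?_) tendsto_const_nhds
    rw [sub_zero, div_self (hpos x).ne']
  -- half integral tends to tailMean
  have hhalfeq : ∀ x : ℝ, (∫ y in (0:ℝ)..x, T (x - y) * T y)
      = 2 * ∫ y in (0:ℝ)..(x/2), T (x - y) * T y := by
    intro x
    have := conv_split hA hpos x (x/2)
    have h0 : x - x/2 = x/2 := by ring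
    rw [h0, intervalIntegral.integral_same] at this
    linarith
  have hhalf : Tendsto (fun x => (∫ y in (0:ℝ)..(x/2), T (x - y) * T y) / T x) atTop
      (nhds (tailMean T)) := by
    have h2 : Tendsto (fun x => ((∫ y in (0:ℝ)..x, T (x - y) * T y) / T x) / 2) atTop
        (nhds (2 * tailMean T / 2)) := hS.div_const 2
    have h3 : (2 : ℝ) * tailMean T / 2 = tailMean T := by ring
    rw [h3] at h2
    refine h2.congr fun x => ?_
    rw [hhalfeq x]; ring
  have hintT : Tendsto (fun x : ℝ => ∫ y in (0:ℝ)..(x/2), T y) atTop (nhds (tailMean T)) :=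
    (tendsto_int_T hint).comp (tendsto_id.atTop_div_const two_pos)
  have hD : Tendsto (fun x => (∫ y in (0:ℝ)..(x/2), T (x - y) * T y) / T x
      - ∫ y in (0:ℝ)..(x/2), T y) atTop (nhds 0) := by
    have := hhalf.sub hintT
    rwa [sub_self] at this
  -- key inequality
  have key : ∀ x : ℝ, 4 * a ≤ x →
      T (x - a) / T x - 1 ≤ ((∫ y in (0:ℝ)..(x/2), T (x - y) * T y) / T x
        - ∫ y in (0:ℝ)..(x/2), T y) / (a * T (2 * a)) := by
    intro x hx
    have hTx := hpos x
    set c0 : ℝ := (T (x - a) - T x) * T (2 * a) with hc0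
    have hc0nn : 0 ≤ c0 := mul_nonneg (by have := hA (show x - a ≤ x by linarith); linarith)
      (hpos _).le
    -- integral lower bounds
    have iT : ∀ u v : ℝ, IntervalIntegrable T volume u v := fun u v => hA.intervalIntegrable
    have hTii : ∀ u v : ℝ, IntervalIntegrable (fun y => T x * T y) volume u v :=
      fun u v => (iT u v).const_mul _
    have i1 : T x * (∫ y in (0:ℝ)..a, T y) ≤ ∫ y in (0:ℝ)..a, T (x - y) * T y := by
      rw [← intervalIntegral.integral_const_mul]
      refine intervalIntegral.integral_mono_on ha.le (hTii 0 a) (conv_ii hA hpos x 0 a)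
        fun y hy => ?_
      exact mul_le_mul_of_nonneg_right (hA (by linarith [hy.1])) (hpos y).le
    have i2 : T x * (∫ y in a..(2*a), T y) + c0 * a ≤ ∫ y in a..(2*a), T (x - y) * T y := by
      have : (∫ y in a..(2*a), (T x * T y + c0)) ≤ ∫ y in a..(2*a), T (x - y) * T y := by
        refine intervalIntegral.integral_mono_on (by linarith) ((hTii a (2*a)).add
          intervalIntegrable_const) (conv_ii hA hpos x a (2*a)) fun y hy => ?_
        have h1 : T (x - a) ≤ T (x - y) := hA (by linarith [hy.1])
        have h2 : T (2 * a) ≤ T y := hA hy.2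
        have : c0 ≤ (T (x - y) - T x) * T y := by
          rw [hc0]
          have hnn : 0 ≤ T (x - a) - T x := by
            have := hA (show x - a ≤ x by linarith); linarith
          refine mul_le_mul (by linarith) h2 (hpos _).le (by linarith)
        nlinarith [hpos y, hA (show x - y ≤ x by linarith [hy.1])]
      rw [intervalIntegral.integral_add (hTii a (2*a)) intervalIntegrable_const,
        intervalIntegral.integral_const_mul, intervalIntegral.integral_const] at this
      have h2a : (2 * a - a) • c0 = c0 * a := by rw [smul_eq_mul]; ring
      linarith [this, h2a ▸ this]
    have i3 : T x * (∫ y in (2*a)..(x/2), T y) ≤ ∫ y in (2*a)..(x/2), T (x - y) * T y := by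
      rw [← intervalIntegral.integral_const_mul]
      refine intervalIntegral.integral_mono_on (by linarith) (hTii _ _)
        (conv_ii hA hpos x _ _) fun y hy => ?_
      exact mul_le_mul_of_nonneg_right (hA (by linarith [hy.1, ha])) (hpos y).le
    -- glue
    have g1 := intervalIntegral.integral_add_adjacent_intervals
      (conv_ii hA hpos x 0 a) (conv_ii hA hpos x a (2*a))
    have g2 := intervalIntegral.integral_add_adjacent_intervals
      ((conv_ii hA hpos x 0 a).trans (conv_ii hA hpos x a (2*a))) (conv_ii hA hpos x (2*a) (x/2))
    have g1' := intervalIntegral.integral_add_adjacent_intervals (iT 0 a) (iT a (2*a))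
    have g2' := intervalIntegral.integral_add_adjacent_intervals
      ((iT 0 a).trans (iT a (2*a))) (iT (2*a) (x/2))
    have main : T x * (∫ y in (0:ℝ)..(x/2), T y) + c0 * a
        ≤ ∫ y in (0:ℝ)..(x/2), T (x - y) * T y := by
      rw [← g2, ← g1, ← g2', ← g1']
      nlinarith [i1, i2, i3]
    -- divide
    have ha2 : 0 < a * T (2 * a) := mul_pos ha (hpos _)
    rw [le_div_iff₀ ha2, div_sub_one hTx.ne', div_mul_eq_mul_div, div_le_iff₀ hTx]
    have hD' : ((∫ y in (0:ℝ)..(x/2), T (x - y) * T y) / T x - ∫ y in (0:ℝ)..(x/2), T y) * T x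
        = (∫ y in (0:ℝ)..(x/2), T (x - y) * T y) - T x * ∫ y in (0:ℝ)..(x/2), T y := by
      field_simp
    rw [hD']
    nlinarith [main]
  -- squeeze
  have hup : Tendsto (fun x => 1 + ((∫ y in (0:ℝ)..(x/2), T (x - y) * T y) / T x
      - ∫ y in (0:ℝ)..(x/2), T y) / (a * T (2*a))) atTop (nhds 1) := by
    simpa using (tendsto_const_nhds (x := (1:ℝ))).add (hD.div_const (a * T (2*a)))
  refine tendsto_of_tendsto_of_tendsto_of_le_of_le' tendsto_const_nhds hup ?_ ?_
  · exact Eventually.of_forall fun x =>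
      (one_le_div (hpos x)).2 (hA (show x - a ≤ x by linarith))
  · filter_upwards [eventually_ge_atTop (4*a)] with x hx
    linarith [key x hx]


lemma T_to_zero (hA : Antitone T) (hpos : ∀ x, 0 < T x)
    (hint : IntegrableOn T (Ioi 0) volume) :
    Tendsto T atTop (nhds 0) := by
  have h1 : Tendsto (fun x : ℝ => (∫ y in (0:ℝ)..x, T y) - ∫ y in (0:ℝ)..(x-1), T y)
      atTop (nhds 0) := by
    have := (tendsto_int_T hint).sub ((tendsto_int_T hint).comp
      (tendsto_atTop_add_const_right atTop (-1) tendsto_id))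
    simpa [sub_eq_add_neg] using this
  refine tendsto_of_tendsto_of_tendsto_of_le_of_le' tendsto_const_nhds h1
    (Eventually.of_forall fun x => (hpos x).le) ?_
  filter_upwards with x
  have iT : ∀ u v : ℝ, IntervalIntegrable T volume u v := fun u v => hA.intervalIntegrable
  have g1 := intervalIntegral.integral_add_adjacent_intervals (iT 0 (x-1)) (iT (x-1) x)
  have h2 : T x = ∫ y in (x-1)..x, (fun _ => T x) y := by
    rw [intervalIntegral.integral_const]; simp
  have h3 : (∫ y in (x-1)..x, (fun _ => T x) y) ≤ ∫ y in (x-1)..x, T y :=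
    intervalIntegral.integral_mono_on (by linarith) intervalIntegrable_const (iT _ _)
      fun y hy => hA hy.2
  linarith [h2 ▸ h3]

lemma small_conv (hA : Antitone T) (hpos : ∀ x, 0 < T x)
    (hlt : ∀ a : ℝ, 0 ≤ a → Tendsto (fun x => T (x - a) / T x) atTop (nhds 1))
    {s : ℝ} (hs : 0 ≤ s) :
    Tendsto (fun x => (∫ y in (0:ℝ)..s, T (x - y) * T y) / T x) atTop
      (nhds (∫ y in (0:ℝ)..s, T y)) := by
  have hJnn : 0 ≤ ∫ y in (0:ℝ)..s, T y :=
    intervalIntegral.integral_nonneg hs fun y _ => (hpos y).le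
  have iT : ∀ u v : ℝ, IntervalIntegrable T volume u v := fun u v => hA.intervalIntegrable
  have hup : Tendsto (fun x => T (x - s) / T x * ∫ y in (0:ℝ)..s, T y) atTop
      (nhds (∫ y in (0:ℝ)..s, T y)) := by
    simpa using (hlt s hs).mul_const (∫ y in (0:ℝ)..s, T y)
  refine tendsto_of_tendsto_of_tendsto_of_le_of_le' tendsto_const_nhds hup ?_ ?_
  · filter_upwards with x
    have : T x * (∫ y in (0:ℝ)..s, T y) ≤ ∫ y in (0:ℝ)..s, T (x - y) * T y := by
      rw [← intervalIntegral.integral_const_mul]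
      refine intervalIntegral.integral_mono_on hs ((iT 0 s).const_mul _)
        (conv_ii hA hpos x 0 s) fun y hy => ?_
      exact mul_le_mul_of_nonneg_right (hA (by linarith [hy.1])) (hpos y).le
    rw [le_div_iff₀ (hpos x)]
    calc (∫ y in (0:ℝ)..s, T y) * T x = T x * ∫ y in (0:ℝ)..s, T y := mul_comm _ _
      _ ≤ _ := this
  · filter_upwards with x
    have : (∫ y in (0:ℝ)..s, T (x - y) * T y) ≤ T (x - s) * ∫ y in (0:ℝ)..s, T y := by
      rw [← intervalIntegral.integral_const_mul]
      refine intervalIntegral.integral_mono_on hs (conv_ii hA hpos x 0 s)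
        ((iT 0 s).const_mul _) fun y hy => ?_
      exact mul_le_mul_of_nonneg_right (hA (by linarith [hy.2])) (hpos y).le
    rw [div_le_iff₀ (hpos x)]
    have he : T (x - s) / T x * (∫ y in (0:ℝ)..s, T y) * T x
        = T (x - s) * ∫ y in (0:ℝ)..s, T y := by
      field_simp
      rw [mul_right_comm, mul_div_cancel_right₀ _ (hpos x).ne']
    rw [he]; exact this

lemma mid_conv (hA : Antitone T) (hpos : ∀ x, 0 < T x)
    (hint : IntegrableOn T (Ioi 0) volume)
    (hS : Tendsto (fun x => (∫ y in (0:ℝ)..x, T (x - y) * T y) / T x) atTop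
      (nhds (2 * tailMean T)))
    {s : ℝ} (hs : 0 ≤ s) :
    Tendsto (fun x => (∫ y in s..(x - s), T (x - y) * T y) / T x) atTop
      (nhds (2 * tailMean T - 2 * ∫ y in (0:ℝ)..s, T y)) := by
  have hsm := (small_conv hA hpos (fun a ha => longtailed hA hpos hint hS ha) hs).const_mul 2
  refine (hS.sub hsm).congr fun x => ?_
  rw [conv_split hA hpos x s]
  ring

lemma closure_lemma {T1 T2 : ℝ → ℝ}
    (hA1 : Antitone T1) (hp1 : ∀ x, 0 < T1 x) (hi1 : IntegrableOn T1 (Ioi 0) volume)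
    (hS1 : Tendsto (fun x => (∫ y in (0:ℝ)..x, T1 (x - y) * T1 y) / T1 x) atTop
      (nhds (2 * tailMean T1)))
    (hA2 : Antitone T2) (hp2 : ∀ x, 0 < T2 x)
    (hrat : Tendsto (fun x => T2 x / T1 x) atTop (nhds 1)) :
    IntegrableOn T2 (Ioi 0) volume ∧
      Tendsto (fun x => (∫ y in (0:ℝ)..x, T2 (x - y) * T2 y) / T2 x) atTop
        (nhds (2 * tailMean T2)) := by
  -- eventual domination
  obtain ⟨M₁, hM₁⟩ := eventually_atTop.1 (hrat.eventually_lt_const (by norm_num : (1:ℝ) < 2))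
  have hdom : ∀ y, max M₁ 1 ≤ y → T2 y ≤ 2 * T1 y := by
    intro y hy
    have := hM₁ y (le_trans (le_max_left _ _) hy)
    rw [div_lt_iff₀ (hp1 y)] at this
    linarith
  set M₀ := max M₁ 1 with hM₀def
  have hM₀pos : (0:ℝ) < M₀ := lt_of_lt_of_le one_pos (le_max_right _ _)
  -- integrability of T2
  have hi2 : IntegrableOn T2 (Ioi 0) volume := by
    have hu : Ioc (0:ℝ) M₀ ∪ Ioi M₀ = Ioi 0 := Ioc_union_Ioi_eq_Ioi hM₀pos.le
    rw [← hu]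
    refine IntegrableOn.union ?_ ?_
    · refine Integrable.mono' (g := fun _ => T2 0)
        (integrableOn_const measure_Ioc_lt_top.ne)
        (hA2.measurable.aestronglyMeasurable) ?_
      filter_upwards [ae_restrict_mem measurableSet_Ioc] with y hy
      rw [Real.norm_eq_abs, abs_of_pos (hp2 y)]
      exact hA2 hy.1.le
    · refine Integrable.mono' (g := fun y => 2 * T1 y)
        (((hi1.mono_set (Ioi_subset_Ioi hM₀pos.le)).const_mul 2))
        (hA2.measurable.aestronglyMeasurable) ?_
      filter_upwards [ae_restrict_mem measurableSet_Ioi] with y hy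
      rw [Real.norm_eq_abs, abs_of_pos (hp2 y)]
      exact hdom y hy.le
  refine ⟨hi2, ?_⟩
  -- inverse ratio
  have hrat' : Tendsto (fun x => T1 x / T2 x) atTop (nhds 1) := by
    have h := (hrat.inv₀ one_ne_zero)
    rw [inv_one] at h
    refine h.congr fun x => ?_
    rw [inv_div]
  -- long-tailedness of T1 and T2
  have hlt1 : ∀ a : ℝ, 0 ≤ a → Tendsto (fun x => T1 (x - a) / T1 x) atTop (nhds 1) :=
    fun a ha => longtailed hA1 hp1 hi1 hS1 ha
  have hlt2 : ∀ a : ℝ, 0 ≤ a → Tendsto (fun x => T2 (x - a) / T2 x) atTop (nhds 1) := by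
    intro a ha
    have hshift : Tendsto (fun x : ℝ => T2 (x - a) / T1 (x - a)) atTop (nhds 1) := by
      have := hrat.comp (tendsto_atTop_add_const_right atTop (-a) tendsto_id)
      refine this.congr fun x => ?_
      simp [sub_eq_add_neg]
    have hmul := (hshift.mul (hlt1 a ha)).mul hrat'
    rw [show (1:ℝ) * 1 * 1 = 1 by norm_num] at hmul
    refine hmul.congr fun x => ?_
    field_simp [(hp1 (x-a)).ne', (hp1 x).ne', (hp2 x).ne']
  -- main limit
  rw [Metric.tendsto_nhds]
  intro ε hε
  set δ := ε / 19 with hδdef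
  have hδ : 0 < δ := by positivity
  -- choose M
  have hc2 : ∀ᶠ M in atTop, 2 * tailMean T1 - 2 * (∫ y in (0:ℝ)..M, T1 y) < δ := by
    have h := (tendsto_int_T hi1).const_mul 2
    have h2 : Tendsto (fun M => 2 * tailMean T1 - 2 * ∫ y in (0:ℝ)..M, T1 y) atTop
        (nhds 0) := by
      simpa using (tendsto_const_nhds (x := 2 * tailMean T1) (f := atTop)).sub h
    exact h2.eventually_lt_const hδ
  have hc3 : ∀ᶠ M in atTop, |2 * (∫ y in (0:ℝ)..M, T2 y) - 2 * tailMean T2| < δ := by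
    have h : Tendsto (fun M => 2 * (∫ y in (0:ℝ)..M, T2 y) - 2 * tailMean T2) atTop
        (nhds 0) := by
      simpa using ((tendsto_int_T hi2).const_mul 2).sub_const (2 * tailMean T2)
    filter_upwards [Metric.tendsto_nhds.1 h δ hδ] with M hM
    rwa [Real.dist_0_eq_abs] at hM
  obtain ⟨M, hMc2, hMc3, hM0, hMM₀⟩ :
      ∃ M : ℝ, (2 * tailMean T1 - 2 * (∫ y in (0:ℝ)..M, T1 y) < δ) ∧
        (|2 * (∫ y in (0:ℝ)..M, T2 y) - 2 * tailMean T2| < δ) ∧ (0:ℝ) ≤ M ∧ M₀ ≤ M := by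
    obtain ⟨M, h⟩ := ((hc2.and hc3).and ((eventually_ge_atTop (0:ℝ)).and
      (eventually_ge_atTop M₀))).exists
    exact ⟨M, h.1.1, h.1.2, h.2.1, h.2.2⟩
  -- eventual facts in x
  have e1' : ∀ᶠ x in atTop,
      |(∫ y in (0:ℝ)..M, T2 (x - y) * T2 y) / T2 x - ∫ y in (0:ℝ)..M, T2 y| < δ := by
    filter_upwards [Metric.tendsto_nhds.1 (small_conv hA2 hp2 hlt2 hM0) δ hδ] with x hx
    rwa [Real.dist_eq] at hx
  have e2' : ∀ᶠ x in atTop, (∫ y in M..(x - M), T1 (x - y) * T1 y) / T1 x < 2 * δ := by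
    refine (mid_conv hA1 hp1 hi1 hS1 hM0).eventually_lt_const ?_
    linarith
  have e3 : ∀ᶠ x in atTop, T1 x / T2 x < 2 := hrat'.eventually_lt_const one_lt_two
  have e4 : ∀ᶠ x in atTop, 2 * M ≤ x := eventually_ge_atTop _
  filter_upwards [e1', e2', e3, e4] with x h1 h2 h3 h4
  rw [Real.dist_eq]
  set A := ∫ y in (0:ℝ)..M, T2 (x - y) * T2 y with hA
  set B := ∫ y in M..(x - M), T2 (x - y) * T2 y with hB
  set B1 := ∫ y in M..(x - M), T1 (x - y) * T1 y with hB1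
  have hsplit : (∫ y in (0:ℝ)..x, T2 (x - y) * T2 y) = 2 * A + B := conv_split hA2 hp2 x M
  have hBnn : 0 ≤ B := intervalIntegral.integral_nonneg (by linarith)
    fun y _ => (mul_pos (hp2 _) (hp2 _)).le
  have hB1nn : 0 ≤ B1 := intervalIntegral.integral_nonneg (by linarith)
    fun y _ => (mul_pos (hp1 _) (hp1 _)).le
  have hB4 : B ≤ 4 * B1 := by
    have hmono : B ≤ ∫ y in M..(x - M), 4 * (T1 (x - y) * T1 y) := by
      refine intervalIntegral.integral_mono_on (by linarith)
        (conv_ii hA2 hp2 x M (x - M)) ((conv_ii hA1 hp1 x M (x - M)).const_mul 4)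
        fun y hy => ?_
      have d1 : T2 (x - y) ≤ 2 * T1 (x - y) := hdom _ (by linarith [hy.2, hMM₀])
      have d2 : T2 y ≤ 2 * T1 y := hdom _ (by linarith [hy.1, hMM₀])
      nlinarith [hp2 (x - y), hp2 y, hp1 (x - y), hp1 y]
    rw [intervalIntegral.integral_const_mul] at hmono
    linarith
  have h2' : B1 < 2 * δ * T1 x := by rwa [div_lt_iff₀ (hp1 x)] at h2
  have h3' : T1 x < 2 * T2 x := by rwa [div_lt_iff₀ (hp2 x)] at h3
  have hBb : B / T2 x ≤ 16 * δ := by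
    rw [div_le_iff₀ (hp2 x)]
    nlinarith [hp1 x, hp2 x]
  have hBnn' : 0 ≤ B / T2 x := div_nonneg hBnn (hp2 x).le
  have hconv : (∫ y in (0:ℝ)..x, T2 (x - y) * T2 y) / T2 x = 2 * (A / T2 x) + B / T2 x := by
    rw [hsplit]; ring
  rw [hconv, abs_lt]
  rw [abs_lt] at h1 hMc3
  constructor <;> [linarith [h1.1, h1.2, hMc3.1, hMc3.2]; linarith [h1.1, h1.2, hMc3.1, hMc3.2]]
/-- scaling: all tail-function properties are preserved by `x ↦ κ * T (α * x)` -/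
lemma scale_conv {T : ℝ → ℝ} (hA : Antitone T) (hpos : ∀ x, 0 < T x)
    (hint : IntegrableOn T (Ioi 0) volume)
    (hS : Tendsto (fun x => (∫ y in (0:ℝ)..x, T (x - y) * T y) / T x) atTop
      (nhds (2 * tailMean T)))
    {κ α : ℝ} (hκ : 0 < κ) (hα : 0 < α) :
    IntegrableOn (fun x => κ * T (α * x)) (Ioi 0) volume ∧
      Tendsto (fun x => (∫ y in (0:ℝ)..x, (κ * T (α * (x - y))) * (κ * T (α * y)))
          / (κ * T (α * x))) atTop (nhds (2 * tailMean (fun x => κ * T (α * x)))) := by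
  have hints : IntegrableOn (fun x => κ * T (α * x)) (Ioi 0) volume := by
    refine Integrable.const_mul ?_ κ
    refine (integrableOn_Ioi_comp_mul_left_iff T 0 hα).2 ?_
    simpa using hint
  refine ⟨hints, ?_⟩
  have hmean : tailMean (fun x => κ * T (α * x)) = κ * α⁻¹ * tailMean T := by
    unfold tailMean
    simp only
    rw [MeasureTheory.integral_const_mul, integral_comp_mul_left_Ioi T 0 hα]
    simp only [mul_zero, smul_eq_mul]
    ring
  have key : ∀ x : ℝ, (∫ y in (0:ℝ)..x, (κ * T (α * (x - y))) * (κ * T (α * y)))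
      = κ * κ * α⁻¹ * ∫ u in (0:ℝ)..(α * x), T (α * x - u) * T u := by
    intro x
    have h1 : (fun y => (κ * T (α * (x - y))) * (κ * T (α * y)))
        = fun y => κ * κ * ((fun u => T (α * x - u) * T u) (α * y)) := by
      funext y; simp only [mul_sub]; ring
    rw [h1, intervalIntegral.integral_const_mul,
      intervalIntegral.integral_comp_mul_left (fun u => T (α * x - u) * T u) hα.ne']
    simp [smul_eq_mul]
    ring
  have hcomp : Tendsto (fun x : ℝ => α * x) atTop atTop :=
    Tendsto.const_mul_atTop hα tendsto_id
  have h := (hS.comp hcomp).const_mul (κ * α⁻¹)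
  have hval : κ * α⁻¹ * (2 * tailMean T) = 2 * tailMean (fun x => κ * T (α * x)) := by
    rw [hmean]; ring
  rw [hval] at h
  refine h.congr fun x => ?_
  simp only [Function.comp_apply]
  rw [key x]
  field_simp [(hpos (α * x)).ne', hκ.ne', hα.ne']

end TailAnalytic

section Prob
open ProbabilityTheory
open scoped ENNReal

variable {Ω : Type*} [MeasurableSpace Ω] (P : Measure Ω) [IsProbabilityMeasure P]

lemma pt_antitone (f : Ω → ℝ) : Antitone (fun x => (P {ω | x < f ω}).toReal) := by
  intro x y hxy
  exact ENNReal.toReal_mono (measure_ne_top P _)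
    (measure_mono fun ω hω => lt_of_le_of_lt hxy hω)

lemma pt_le_one (f : Ω → ℝ) (x : ℝ) : (P {ω | x < f ω}).toReal ≤ 1 := by
  rw [show (1:ℝ) = (P univ).toReal by simp]
  exact ENNReal.toReal_mono (measure_ne_top P _) (measure_mono (subset_univ _))

variable {P}

lemma pt_mono_event {f g : Ω → ℝ} {x y : ℝ} (h : ∀ ω, x < f ω → y < g ω) :
    (P {ω | x < f ω}).toReal ≤ (P {ω | y < g ω}).toReal :=
  ENNReal.toReal_mono (measure_ne_top P _) (measure_mono fun ω hω => h ω hω)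

/-- union bound for the tail of the sum -/
lemma sum_tail_union_bound (X : ℕ → Ω → ℝ) (d : ℕ)
    (hident : ∀ j < d, IdentDistrib (X j) (X 0) P P)
    {n : ℕ} (hn1 : 1 ≤ n) (hnd : n ≤ d) (x : ℝ) :
    (P {ω | x < ∑ j ∈ Finset.range n, X j ω}).toReal
      ≤ n * (P {ω | x / n < X 0 ω}).toReal := by
  have hsub : {ω | x < ∑ j ∈ Finset.range n, X j ω}
      ⊆ ⋃ j ∈ Finset.range n, {ω | x / n < X j ω} := by
    intro ω hω
    by_contra hc
    simp only [mem_iUnion, not_exists, mem_setOf_eq, not_lt] at hc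
    have : (∑ j ∈ Finset.range n, X j ω) ≤ ∑ j ∈ Finset.range n, x / n :=
      Finset.sum_le_sum fun j hj => hc j hj
    rw [Finset.sum_const, Finset.card_range, nsmul_eq_mul] at this
    have hn0 : (n:ℝ) ≠ 0 := Nat.cast_ne_zero.2 (by omega)
    rw [mul_div_cancel₀ x hn0] at this
    exact absurd hω (not_lt.2 this)
  have h1 : P {ω | x < ∑ j ∈ Finset.range n, X j ω}
      ≤ ∑ j ∈ Finset.range n, P {ω | x / n < X j ω} :=
    le_trans (measure_mono hsub) (measure_biUnion_finset_le _ _)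
  have h2 : ∀ j ∈ Finset.range n, P {ω | x / n < X j ω} = P {ω | x / n < X 0 ω} := by
    intro j hj
    exact (hident j (lt_of_lt_of_le (Finset.mem_range.1 hj) hnd)).measure_mem_eq
      measurableSet_Ioi
  rw [Finset.sum_congr rfl h2, Finset.sum_const, Finset.card_range, nsmul_eq_mul] at h1
  calc (P {ω | x < ∑ j ∈ Finset.range n, X j ω}).toReal
      ≤ ((n : ℝ≥0∞) * P {ω | x / n < X 0 ω}).toReal :=
        ENNReal.toReal_mono (by finiteness) h1
    _ = n * (P {ω | x / n < X 0 ω}).toReal := by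
        rw [ENNReal.toReal_mul]; simp

end Prob

section StepDev

variable {Ω : Type*} [MeasurableSpace Ω] {P : Measure Ω} [IsProbabilityMeasure P]

/-- The inclusion of the tail event of the sum into the union used for the grid bound. -/
lemma grid_incl (X : ℕ → Ω → ℝ) (m : ℕ) {x t : ℝ} :
    {ω | x < ∑ j ∈ Finset.range (m+1), X j ω} ⊆
      ({ω | x - t < ∑ j ∈ Finset.range m, X j ω} ∪ {ω | x - t < X m ω}) ∪
      ⋃ k ∈ Finset.range (⌊x - 2*t⌋.toNat + 1),
        ({ω | t + k - 1 < ∑ j ∈ Finset.range m, X j ω} ∩ {ω | x - t - k - 1 < X m ω}) := by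
  intro ω hω
  simp only [mem_setOf_eq, Finset.sum_range_succ] at hω
  set s := ∑ j ∈ Finset.range m, X j ω with hs
  set xm := X m ω with hxm
  by_cases h1 : x - t < s
  · exact Or.inl (Or.inl h1)
  by_cases h2 : x - t < xm
  · exact Or.inl (Or.inr h2)
  push_neg at h1 h2
  right
  have hxm_gt : t < xm := by linarith
  have hs_gt : t < s := by linarith
  set k : ℕ := ⌊s - t⌋.toNat with hk
  have hfl : (0:ℤ) ≤ ⌊s - t⌋ := Int.floor_nonneg.2 (by linarith)
  have hkc : (k:ℝ) = (⌊s - t⌋ : ℤ) := by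
    rw [hk]; exact_mod_cast congrArg (Int.cast : ℤ → ℝ) (Int.toNat_of_nonneg hfl)
  have hk_le : (k:ℝ) ≤ s - t := by rw [hkc]; exact Int.floor_le _
  have hk_gt : s - t < k + 1 := by rw [hkc]; exact Int.lt_floor_add_one _
  refine mem_iUnion₂.2 ⟨k, ?_, ?_, ?_⟩
  · rw [Finset.mem_range]
    have h := Int.toNat_le_toNat (Int.floor_le_floor (show s - t ≤ x - 2*t by linarith))
    omega
  · simp only [mem_setOf_eq]; linarith
  · simp only [mem_setOf_eq]; linarith


/-- measure bound from the grid inclusion -/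
lemma grid_measure_bound (X : ℕ → Ω → ℝ) (hmeas : ∀ j, Measurable (X j)) (m : ℕ) (x t : ℝ) :
    (P {ω | x < ∑ j ∈ Finset.range (m+1), X j ω}).toReal ≤
      (P {ω | x - t < ∑ j ∈ Finset.range m, X j ω}).toReal +
      (P {ω | x - t < X m ω}).toReal +
      ∑ k ∈ Finset.range (⌊x - 2*t⌋.toNat + 1),
        (P ({ω | t + k - 1 < ∑ j ∈ Finset.range m, X j ω} ∩
            {ω | x - t - k - 1 < X m ω})).toReal := by
  set K := ⌊x - 2*t⌋.toNat + 1 with hK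
  have h1 : P {ω | x < ∑ j ∈ Finset.range (m+1), X j ω} ≤
      (P {ω | x - t < ∑ j ∈ Finset.range m, X j ω} +
       P {ω | x - t < X m ω}) +
      ∑ k ∈ Finset.range K,
        P ({ω | t + k - 1 < ∑ j ∈ Finset.range m, X j ω} ∩ {ω | x - t - k - 1 < X m ω}) := by
    refine le_trans (measure_mono (grid_incl X m (x := x) (t := t))) ?_
    refine le_trans (measure_union_le _ _) ?_
    exact add_le_add (measure_union_le _ _) (measure_biUnion_finset_le _ _)
  have hsum : (∑ k ∈ Finset.range K,
      P ({ω | t + k - 1 < ∑ j ∈ Finset.range m, X j ω} ∩ {ω | x - t - k - 1 < X m ω})) ≠ ⊤ := by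
    refine ne_of_lt ?_
    refine ENNReal.sum_lt_top.2 fun a _ => measure_lt_top P _
  have h2 := ENNReal.toReal_mono (ENNReal.add_ne_top.2 ⟨ENNReal.add_ne_top.2
    ⟨measure_ne_top P _, measure_ne_top P _⟩, hsum⟩) h1
  refine le_trans h2 (le_of_eq ?_)
  rw [ENNReal.toReal_add (ENNReal.add_ne_top.2 ⟨measure_ne_top P _, measure_ne_top P _⟩) hsum,
    ENNReal.toReal_add (measure_ne_top P _) (measure_ne_top P _),
    ENNReal.toReal_sum (fun a _ => measure_ne_top P _)]

end StepDev

section GridSum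
variable {T : ℝ → ℝ}

lemma grid_sum_le_integral (hA : Antitone T) (hpos : ∀ x, 0 < T x)
    {x t : ℝ} (hx : 2 * t ≤ x) :
    (∑ k ∈ Finset.range (⌊x - 2*t⌋.toNat + 1), T (t + k - 1) * T (x - t - k - 1))
      ≤ ∫ y in (t-2)..(x-t-1), T ((x-3) - y) * T y := by
  set K := ⌊x - 2*t⌋.toNat + 1 with hKdef
  set a : ℕ → ℝ := fun k => t - 2 + k with ha
  have hii : ∀ u v : ℝ, IntervalIntegrable (fun y => T ((x-3) - y) * T y) volume u v :=
    fun u v => conv_ii hA hpos (x-3) u v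
  have hterm : ∀ k ∈ Finset.range K, T (t + k - 1) * T (x - t - k - 1)
      ≤ ∫ y in (a k)..(a (k+1)), T ((x-3) - y) * T y := by
    intro k _
    have hle : a k ≤ a (k+1) := by simp only [ha]; push_cast; linarith
    rw [mul_comm]
    have hconst : T (x - t - k - 1) * T (t + k - 1)
        = ∫ y in (a k)..(a (k+1)), (fun _ => T (x - t - k - 1) * T (t + k - 1)) y := by
      rw [intervalIntegral.integral_const]
      have : a (k+1) - a k = 1 := by simp only [ha]; push_cast; ring
      rw [this, one_smul]
    rw [hconst]
    refine intervalIntegral.integral_mono_on hle intervalIntegrable_const (hii _ _)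
      fun y hy => ?_
    have hy1 : t - 2 + k ≤ y := by
      have := hy.1; simpa [ha] using this
    have hy2 : y ≤ t - 1 + k := by
      have := hy.2; simp [ha] at this; push_cast at this; linarith
    have e1 : T (t + k - 1) ≤ T y := hA (by linarith)
    have e2 : T (x - t - k - 1) ≤ T ((x-3) - y) := hA (by linarith)
    exact mul_le_mul e2 e1 (hpos _).le (hpos _).le
  have hsum : (∑ k ∈ Finset.range K, T (t + k - 1) * T (x - t - k - 1))
      ≤ ∑ k ∈ Finset.range K, ∫ y in (a k)..(a (k+1)), T ((x-3) - y) * T y :=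
    Finset.sum_le_sum hterm
  rw [intervalIntegral.sum_integral_adjacent_intervals (fun k _ => hii _ _)] at hsum
  have haK : a K ≤ x - t - 1 := by
    simp only [ha]
    have h1 : (⌊x - 2*t⌋.toNat : ℝ) ≤ x - 2*t := by
      rcases le_or_gt 0 (x - 2*t) with h | h
      · have := Int.floor_le (x - 2*t)
        have h2 : ((⌊x - 2*t⌋.toNat : ℤ) : ℝ) = (⌊x - 2*t⌋ : ℝ) := by
          exact_mod_cast congrArg (Int.cast : ℤ → ℝ) (Int.toNat_of_nonneg
            (Int.floor_nonneg.2 h))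
        push_cast at h2 ⊢
        linarith [h2 ▸ this]
      · linarith
    rw [hKdef]
    push_cast
    push_cast at h1
    linarith
  have hglue := intervalIntegral.integral_add_adjacent_intervals
    (hii (a 0) (a K)) (hii (a K) (x - t - 1))
  have hnn : 0 ≤ ∫ y in (a K)..(x-t-1), T ((x-3) - y) * T y :=
    intervalIntegral.integral_nonneg haK fun y _ => (mul_pos (hpos _) (hpos _)).le
  have ha0 : a 0 = t - 2 := by simp [ha]
  rw [ha0] at hglue
  calc (∑ k ∈ Finset.range K, T (t + k - 1) * T (x - t - k - 1))
      ≤ ∫ y in (a 0)..(a K), T ((x-3) - y) * T y := hsum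
    _ ≤ ∫ y in (t-2)..(x-t-1), T ((x-3) - y) * T y := by rw [ha0]; linarith [hglue, hnn]
end GridSum

section MainInduction
open ProbabilityTheory
variable {Ω : Type*} [MeasurableSpace Ω] {P : Measure Ω} [IsProbabilityMeasure P]

lemma step_lemma (X : ℕ → Ω → ℝ) (hmeas : ∀ j, Measurable (X j)) (hposX : ∀ j ω, 0 ≤ X j ω)
    {d : ℕ} (hident : ∀ j < d, IdentDistrib (X j) (X 0) P P)
    (hp : ∀ x, 0 < (P {ω | x < X 0 ω}).toReal)
    (hint : IntegrableOn (fun x => (P {ω | x < X 0 ω}).toReal) (Ioi 0) volume)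
    (hS : Tendsto (fun x => (∫ y in (0:ℝ)..x, (P {ω | x - y < X 0 ω}).toReal *
        (P {ω | y < X 0 ω}).toReal) / (P {ω | x < X 0 ω}).toReal) atTop
      (nhds (2 * tailMean fun x => (P {ω | x < X 0 ω}).toReal)))
    (g : ℕ → ℝ) (hg : ∀ n, 0 < g n) (x₀ : ℝ) (hx₀ : 0 < x₀)
    (hLWQD : ∀ n, 2 ≤ n → n ≤ d → ∀ x ≥ x₀, ∀ y ≥ x₀,
      (P ({ω | x < ∑ j ∈ Finset.range (n - 1), X j ω} ∩ {ω | y < X (n - 1) ω})).toReal ≤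
        g (n - 1) * (P {ω | x < ∑ j ∈ Finset.range (n - 1), X j ω}).toReal *
          (P {ω | y < X (n - 1) ω}).toReal)
    {m : ℕ} (hm1 : 1 ≤ m) (hmd : m + 1 ≤ d)
    (ih : Tendsto (fun x => (P {ω | x < ∑ j ∈ Finset.range m, X j ω}).toReal /
        (P {ω | x < X 0 ω}).toReal) atTop (nhds m)) :
    Tendsto (fun x => (P {ω | x < ∑ j ∈ Finset.range (m+1), X j ω}).toReal /
        (P {ω | x < X 0 ω}).toReal) atTop (nhds ((m:ℝ)+1)) := by
  set T : ℝ → ℝ := fun x => (P {ω | x < X 0 ω}).toReal with hT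
  set Tn : ℝ → ℝ := fun x => (P {ω | x < ∑ j ∈ Finset.range m, X j ω}).toReal with hTn
  set Tn1 : ℝ → ℝ := fun x => (P {ω | x < ∑ j ∈ Finset.range (m+1), X j ω}).toReal with hTn1
  have hdiv : ∀ u v w : ℝ, 0 < w → u ≤ v → u / w ≤ v / w := fun u v w hw huv => by
    rw [div_eq_mul_inv, div_eq_mul_inv]
    exact mul_le_mul_of_nonneg_right huv (inv_nonneg.2 hw.le)
  have hTA : Antitone T := pt_antitone P (X 0)
  have hTnA : Antitone Tn := pt_antitone P _
  have hTn1A : Antitone Tn1 := pt_antitone P _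
  have hTnn : ∀ y, 0 ≤ Tn y := fun y => ENNReal.toReal_nonneg
  have hlt : ∀ a : ℝ, 0 ≤ a → Tendsto (fun x => T (x - a) / T x) atTop (nhds 1) :=
    fun a ha => longtailed hTA hp hint hS ha
  have hXm : ∀ y : ℝ, (P {ω | y < X m ω}).toReal = T y := fun y =>
    congrArg ENNReal.toReal ((hident m (by omega)).measure_mem_eq measurableSet_Ioi)
  have hlw : ∀ x, x₀ ≤ x → ∀ y, x₀ ≤ y →
      (P ({ω | x < ∑ j ∈ Finset.range m, X j ω} ∩ {ω | y < X m ω})).toReal ≤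
        g m * Tn x * T y := by
    intro x hx y hy
    have h := hLWQD (m+1) (by omega) hmd x hx y hy
    simp only [Nat.add_sub_cancel] at h
    rw [hXm y] at h
    exact h
  -- `Tn → 0`
  have hzero : Tendsto Tn atTop (nhds 0) := by
    have hub := fun x => sum_tail_union_bound X d hident hm1 (by omega) x
    have hmpos : (0:ℝ) < m := by exact_mod_cast hm1
    have hup : Tendsto (fun x : ℝ => (m:ℝ) * T (x / m)) atTop (nhds 0) := by
      have := ((T_to_zero hTA hp hint).comp (tendsto_id.atTop_div_const hmpos)).const_mul (m:ℝ)
      simpa using this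
    exact tendsto_of_tendsto_of_tendsto_of_le_of_le tendsto_const_nhds hup
      (fun x => hTnn x) (fun x => hub x)
  -- lower bound
  have hlower : ∀ x, x₀ ≤ x → Tn x + T x - g m * Tn x * T x ≤ Tn1 x := by
    intro x hx
    set A := {ω | x < ∑ j ∈ Finset.range m, X j ω} with hA
    set B := {ω | x < X m ω} with hB
    have hBmeas : MeasurableSet B := measurableSet_lt measurable_const (hmeas m)
    have hsum : P (A ∪ B) + P (A ∩ B) = P A + P B := measure_union_add_inter A hBmeas
    have htr : (P (A ∪ B)).toReal + (P (A ∩ B)).toReal = Tn x + (P B).toReal := by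
      rw [← ENNReal.toReal_add (measure_ne_top P _) (measure_ne_top P _), hsum,
        ENNReal.toReal_add (measure_ne_top P _) (measure_ne_top P _)]
    have hBT : (P B).toReal = T x := hXm x
    have hU : (P (A ∪ B)).toReal ≤ Tn1 x := by
      refine ENNReal.toReal_mono (measure_ne_top P _) (measure_mono ?_)
      rintro ω (hω | hω) <;> simp only [mem_setOf_eq, Finset.sum_range_succ]
      · have := hposX m ω; simp only [hA, mem_setOf_eq] at hω; linarith
      · have : 0 ≤ ∑ j ∈ Finset.range m, X j ω :=
          Finset.sum_nonneg fun j _ => hposX j ω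
        simp only [hB, mem_setOf_eq] at hω; linarith
    have hI : (P (A ∩ B)).toReal ≤ g m * Tn x * T x := hlw x hx x hx
    rw [hBT] at htr
    linarith
  have hlowT : Tendsto (fun x => Tn x / T x + 1 - g m * Tn x) atTop (nhds ((m:ℝ) + 1)) := by
    have := (ih.add (tendsto_const_nhds (x := (1:ℝ)))).sub (hzero.const_mul (g m))
    simpa using this
  -- global domination `Tn ≤ C * T`
  obtain ⟨C, hCpos, hCdom⟩ : ∃ C : ℝ, 0 < C ∧ ∀ y, Tn y ≤ C * T y := by
    obtain ⟨y₁, hy₁⟩ := eventually_atTop.1 (ih.eventually_lt_const (lt_add_one (m:ℝ)))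
    refine ⟨((m:ℝ)+1) + 1 / T y₁, add_pos (by positivity) (one_div_pos.2 (hp y₁)), fun y => ?_⟩
    rcases le_or_gt y₁ y with h | h
    · have h2 := hy₁ y h
      rw [div_lt_iff₀ (hp y)] at h2
      have h3 : 0 < 1 / T y₁ := one_div_pos.2 (hp y₁)
      nlinarith [hp y]
    · have h2 : Tn y ≤ 1 := pt_le_one P _ y
      have h3 : T y₁ ≤ T y := hTA h.le
      have h4 : (1:ℝ) ≤ 1 / T y₁ * T y := by
        rw [one_div, inv_mul_eq_div, le_div_iff₀ (hp y₁)]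
        simpa using h3
      nlinarith [hp y]
  -- final ε-argument
  rw [Metric.tendsto_nhds]
  intro ε hε
  -- choose t
  have h0 : Tendsto (fun s : ℝ => 2 * tailMean T - 2 * ∫ y in (0:ℝ)..s, T y) atTop (nhds 0) := by
    simpa using (tendsto_const_nhds (x := 2 * tailMean T) (f := atTop)).sub
      ((tendsto_int_T hint).const_mul 2)
  have h0' : Tendsto (fun t : ℝ => g m * C * (2 * tailMean T - 2 * ∫ y in (0:ℝ)..(t-2), T y))
      atTop (nhds 0) := by
    have h := (h0.comp (tendsto_atTop_add_const_right atTop (-2) tendsto_id)).const_mul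
      (g m * C)
    rw [mul_zero] at h
    refine h.congr fun t => ?_
    simp [Function.comp, sub_eq_add_neg]
  obtain ⟨t, htsmall, ht3⟩ : ∃ t : ℝ,
      g m * C * (2 * tailMean T - 2 * ∫ y in (0:ℝ)..(t-2), T y) < ε/2 ∧ x₀ + 3 ≤ t := by
    obtain ⟨t, h⟩ := ((h0'.eventually_lt_const (by linarith : (0:ℝ) < ε/2)).and
      (eventually_ge_atTop (x₀+3))).exists
    exact ⟨t, h.1, h.2⟩
  have ht0 : (0:ℝ) ≤ t := by linarith
  have ht2 : (0:ℝ) ≤ t - 2 := by linarith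
  -- the limit of the upper-bound function
  have hsh : Tendsto (fun x : ℝ => x - t) atTop atTop := by
    simpa [sub_eq_add_neg] using tendsto_atTop_add_const_right atTop (-t) tendsto_id
  have hU1 : Tendsto (fun x => Tn (x - t) / T x) atTop (nhds (m:ℝ)) := by
    have h := (ih.comp hsh).mul (hlt t ht0)
    rw [mul_one] at h
    refine h.congr fun x => ?_
    simp only [Function.comp_apply]
    rw [div_mul_div_comm, mul_comm (T (x-t)) (T x), ← div_mul_div_comm,
      div_self (hp (x-t)).ne', mul_one]
  have hU3 : Tendsto (fun x => (∫ y in (t-2)..(x-t-1), T ((x-3) - y) * T y) / T x) atTop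
      (nhds (2 * tailMean T - 2 * ∫ y in (0:ℝ)..(t-2), T y)) := by
    have hsh3 : Tendsto (fun x : ℝ => x - 3) atTop atTop := by
      simpa [sub_eq_add_neg] using tendsto_atTop_add_const_right atTop (-3 : ℝ) tendsto_id
    have hmid := (mid_conv hTA hp hint hS ht2).comp hsh3
    have h := hmid.mul (hlt 3 (by norm_num))
    rw [mul_one] at h
    refine h.congr fun x => ?_
    simp only [Function.comp_apply]
    have harg : x - 3 - (t - 2) = x - t - 1 := by ring
    rw [harg, div_mul_div_comm, mul_comm (T (x-3)) (T x), ← div_mul_div_comm,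
      div_self (hp (x-3)).ne', mul_one]
  have hUlim := (hU1.add (hlt t ht0)).add (hU3.const_mul (g m * C))
  have hUb := hUlim.eventually (eventually_lt_nhds
    (show (m:ℝ) + 1 + g m * C * (2 * tailMean T - 2 * ∫ y in (0:ℝ)..(t-2), T y)
      < (m:ℝ) + 1 + ε by linarith))
  have hlowE := hlowT.eventually (eventually_gt_nhds
    (show (m:ℝ) + 1 - ε < (m:ℝ) + 1 by linarith))
  filter_upwards [hUb, hlowE, eventually_ge_atTop (2*t), eventually_ge_atTop x₀]
    with x h1 h2 h3 h4
  -- lower bound on the ratio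
  have hlo : Tn x / T x + 1 - g m * Tn x ≤ Tn1 x / T x := by
    have h5 := hdiv _ _ _ (hp x) (hlower x h4)
    have hre : (Tn x + T x - g m * Tn x * T x) / T x = Tn x / T x + 1 - g m * Tn x := by
      have hTx : T x ≠ 0 := (hp x).ne'
      rw [sub_div, add_div, div_self hTx, mul_div_cancel_right₀ _ hTx]
    rwa [hre] at h5
  -- upper bound on the ratio
  have hflx : ((⌊x - 2*t⌋.toNat : ℕ) : ℝ) ≤ x - 2*t := by
    have hz : (0:ℝ) ≤ x - 2*t := by linarith
    have h7 : ((⌊x - 2*t⌋.toNat : ℤ) : ℝ) = ((⌊x - 2*t⌋ : ℤ) : ℝ) :=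
      congrArg (Int.cast : ℤ → ℝ) (Int.toNat_of_nonneg (Int.floor_nonneg.2 hz))
    push_cast at h7 ⊢
    rw [h7]
    exact Int.floor_le _
  have hsumb : (∑ k ∈ Finset.range (⌊x - 2*t⌋.toNat + 1),
      (P ({ω | t + k - 1 < ∑ j ∈ Finset.range m, X j ω} ∩
          {ω | x - t - k - 1 < X m ω})).toReal)
      ≤ g m * C * ∫ y in (t-2)..(x-t-1), T ((x-3) - y) * T y := by
    have hterm : ∀ k ∈ Finset.range (⌊x - 2*t⌋.toNat + 1),
        (P ({ω | t + k - 1 < ∑ j ∈ Finset.range m, X j ω} ∩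
            {ω | x - t - k - 1 < X m ω})).toReal
        ≤ g m * C * (T (t + k - 1) * T (x - t - k - 1)) := by
      intro k hk
      have hkK : (k:ℝ) ≤ ((⌊x - 2*t⌋.toNat : ℕ) : ℝ) := by
        have := Finset.mem_range.1 hk
        exact_mod_cast Nat.lt_succ_iff.1 this
      have hkx : (k:ℝ) ≤ x - 2*t := le_trans hkK hflx
      have hknn : (0:ℝ) ≤ (k:ℝ) := Nat.cast_nonneg k
      have e1 : x₀ ≤ t + k - 1 := by linarith
      have e2 : x₀ ≤ x - t - k - 1 := by linarith
      have h8 := hlw _ e1 _ e2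
      have h9 : g m * Tn (t + k - 1) * T (x - t - k - 1)
          ≤ g m * C * (T (t + k - 1) * T (x - t - k - 1)) := by
        have hdm := hCdom (t + k - 1)
        have hTnn2 : 0 ≤ T (x - t - k - 1) := (hp _).le
        nlinarith [mul_le_mul_of_nonneg_left (mul_le_mul_of_nonneg_right hdm hTnn2) (hg m).le]
      exact le_trans h8 h9
    calc (∑ k ∈ Finset.range (⌊x - 2*t⌋.toNat + 1),
        (P ({ω | t + k - 1 < ∑ j ∈ Finset.range m, X j ω} ∩
            {ω | x - t - k - 1 < X m ω})).toReal)
        ≤ ∑ k ∈ Finset.range (⌊x - 2*t⌋.toNat + 1),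
            g m * C * (T (t + k - 1) * T (x - t - k - 1)) := Finset.sum_le_sum hterm
      _ = g m * C * ∑ k ∈ Finset.range (⌊x - 2*t⌋.toNat + 1),
            T (t + k - 1) * T (x - t - k - 1) := by rw [Finset.mul_sum]
      _ ≤ g m * C * ∫ y in (t-2)..(x-t-1), T ((x-3) - y) * T y := by
          refine mul_le_mul_of_nonneg_left ?_ (mul_pos (hg m) hCpos).le
          exact grid_sum_le_integral hTA hp (by linarith)
  have hup : Tn1 x / T x ≤ Tn (x - t) / T x + T (x - t) / T x
      + g m * C * ((∫ y in (t-2)..(x-t-1), T ((x-3) - y) * T y) / T x) := by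
    have h10 := grid_measure_bound (P := P) X hmeas m x t
    rw [hXm (x - t)] at h10
    have h11 : Tn1 x ≤ Tn (x - t) + T (x - t)
        + g m * C * ∫ y in (t-2)..(x-t-1), T ((x-3) - y) * T y := by
      refine le_trans h10 ?_
      linarith [hsumb]
    have h12 := hdiv _ _ _ (hp x) h11
    refine le_trans h12 (le_of_eq ?_)
    field_simp
    rfl
  rw [Real.dist_eq, abs_lt]
  constructor
  · push_cast
    linarith
  · push_cast
    linarith

end MainInduction

section Assemble
open ProbabilityTheory
variable {Ω : Type*} [MeasurableSpace Ω] {P : Measure Ω} [IsProbabilityMeasure P]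

lemma sum_tail_equiv (X : ℕ → Ω → ℝ) (hmeas : ∀ j, Measurable (X j))
    (hposX : ∀ j ω, 0 ≤ X j ω)
    {d : ℕ} (hident : ∀ j < d, IdentDistrib (X j) (X 0) P P)
    (hp : ∀ x, 0 < (P {ω | x < X 0 ω}).toReal)
    (hint : IntegrableOn (fun x => (P {ω | x < X 0 ω}).toReal) (Ioi 0) volume)
    (hS : Tendsto (fun x => (∫ y in (0:ℝ)..x, (P {ω | x - y < X 0 ω}).toReal *
        (P {ω | y < X 0 ω}).toReal) / (P {ω | x < X 0 ω}).toReal) atTop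
      (nhds (2 * tailMean fun x => (P {ω | x < X 0 ω}).toReal)))
    (g : ℕ → ℝ) (hg : ∀ n, 0 < g n) (x₀ : ℝ) (hx₀ : 0 < x₀)
    (hLWQD : ∀ n, 2 ≤ n → n ≤ d → ∀ x ≥ x₀, ∀ y ≥ x₀,
      (P ({ω | x < ∑ j ∈ Finset.range (n - 1), X j ω} ∩ {ω | y < X (n - 1) ω})).toReal ≤
        g (n - 1) * (P {ω | x < ∑ j ∈ Finset.range (n - 1), X j ω}).toReal *
          (P {ω | y < X (n - 1) ω}).toReal) :
    ∀ n : ℕ, 1 ≤ n → n ≤ d →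
      Tendsto (fun x => (P {ω | x < ∑ j ∈ Finset.range n, X j ω}).toReal /
        (P {ω | x < X 0 ω}).toReal) atTop (nhds (n:ℝ)) := by
  intro n
  induction n with
  | zero => omega
  | succ k ihk =>
    intro _ hkd
    rcases Nat.eq_zero_or_pos k with rfl | hk
    · have heq : (fun x => (P {ω | x < ∑ j ∈ Finset.range 1, X j ω}).toReal /
          (P {ω | x < X 0 ω}).toReal) = fun x : ℝ => 1 := by
        funext x
        rw [show {ω | x < ∑ j ∈ Finset.range 1, X j ω} = {ω | x < X 0 ω} by
          simp [Finset.sum_range_one]]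
        exact div_self (hp x).ne'
      rw [heq]
      norm_num
    · have ihm := ihk (by omega) (by omega)
      have h := step_lemma X hmeas hposX hident hp hint hS g hg x₀ hx₀ hLWQD hk hkd ihm
      have : ((k:ℝ) + 1) = ((k+1 : ℕ) : ℝ) := by push_cast; ring
      rwa [this] at h

end Assemble


/-- LWQD, identically distributed nonnegative random variables with common distribution
`G ∈ 𝒮*`: for `A₁' = {x : Σᵢ xᵢ/d > c}` the tail `x ↦ P[(c/d)·Σⱼ Xⱼ > x]` of `F_{A₁'}`
satisfies `P[(c/d)Σⱼ Xⱼ > x] ∼ d·Ḡ'(x)` with `G'` the law of `(c/d)X₁`, and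
`F ∈ 𝒮*_{A₁'}`. -/

theorem statement15 (d : ℕ) (hd : 0 < d)
    {Ω : Type*} [MeasurableSpace Ω] (P : Measure Ω) [IsProbabilityMeasure P]
    (X : ℕ → Ω → ℝ) (hmeas : ∀ j, Measurable (X j))
    (hpos : ∀ j ω, 0 ≤ X j ω)
    (hident : ∀ j < d, IdentDistrib (X j) (X 0) P P)
    (hG : StrongSubexpFun (fun x => (P {ω | x < X 0 ω}).toReal))
    (g : ℕ → ℝ) (hg : ∀ n, 0 < g n) (x₀ : ℝ) (hx₀ : 0 < x₀)
    (hLWQD : ∀ n, 2 ≤ n → n ≤ d → ∀ x ≥ x₀, ∀ y ≥ x₀,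
      (P ({ω | x < ∑ j ∈ Finset.range (n - 1), X j ω} ∩ {ω | y < X (n - 1) ω})).toReal ≤
        g (n - 1) * (P {ω | x < ∑ j ∈ Finset.range (n - 1), X j ω}).toReal *
          (P {ω | y < X (n - 1) ω}).toReal) :
    ∀ c > (0 : ℝ),
      Tendsto (fun x =>
          (P {ω | x < (c / d) * ∑ j ∈ Finset.range d, X j ω}).toReal /
            ((d : ℝ) * (P {ω | x < (c / d) * X 0 ω}).toReal)) atTop (nhds 1) ∧
        StrongSubexpFun (fun x => (P {ω | x < (c / d) * ∑ j ∈ Finset.range d, X j ω}).toReal) := by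
  intro c hc
  obtain ⟨hp, hint, hS⟩ := hG
  set T : ℝ → ℝ := fun x => (P {ω | x < X 0 ω}).toReal with hT
  set Td : ℝ → ℝ := fun x => (P {ω | x < ∑ j ∈ Finset.range d, X j ω}).toReal with hTd
  have hTA : Antitone T := pt_antitone P (X 0)
  have hTdA : Antitone Td := pt_antitone P _
  have hdpos : (0:ℝ) < (d:ℝ) := Nat.cast_pos.2 hd
  have hS' : Tendsto (fun x => (∫ y in (0:ℝ)..x, T (x - y) * T y) / T x) atTop
      (nhds (2 * tailMean T)) := hS
  -- the main equivalence
  have hequiv := sum_tail_equiv X hmeas hpos hident hp hint hS' g hg x₀ hx₀ hLWQD d hd le_rfl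
  have hmain : Tendsto (fun y => Td y / ((d:ℝ) * T y)) atTop (nhds 1) := by
    have h := hequiv.div_const (d:ℝ)
    rw [div_self hdpos.ne'] at h
    refine h.congr fun y => ?_
    rw [div_div, mul_comm]
  -- the scaling map
  set σ : ℝ → ℝ := fun x => ((d:ℝ)/c) * x with hσ
  have hσpos : (0:ℝ) < (d:ℝ)/c := div_pos hdpos hc
  have hσtop : Tendsto σ atTop atTop := Tendsto.const_mul_atTop hσpos tendsto_id
  have hiff : ∀ (x s : ℝ), x < (c/(d:ℝ)) * s ↔ σ x < s := by
    intro x s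
    have hcs : (c/(d:ℝ)) * s = s / ((d:ℝ)/c) := by
      rw [eq_div_iff hσpos.ne']
      field_simp
    rw [hcs, lt_div_iff₀ hσpos]
    constructor <;> intro h <;> · simp only [hσ]at h ⊢; linarith
  -- rewriting the scaled tail functions
  have hsetS : ∀ x : ℝ, {ω | x < (c/(d:ℝ)) * ∑ j ∈ Finset.range d, X j ω}
      = {ω | σ x < ∑ j ∈ Finset.range d, X j ω} := by
    intro x; ext ω; exact hiff x _
  have hsetX : ∀ x : ℝ, {ω | x < (c/(d:ℝ)) * X 0 ω} = {ω | σ x < X 0 ω} := by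
    intro x; ext ω; exact hiff x _
  have hfunS : ∀ x : ℝ, (P {ω | x < (c/(d:ℝ)) * ∑ j ∈ Finset.range d, X j ω}).toReal
      = Td (σ x) := fun x => by rw [hsetS x]
  have hfunX : ∀ x : ℝ, (P {ω | x < (c/(d:ℝ)) * X 0 ω}).toReal = T (σ x) :=
    fun x => by rw [hsetX x]
  constructor
  · have h := hmain.comp hσtop
    refine h.congr fun x => ?_
    simp only [Function.comp_apply]
    rw [hfunS x, hfunX x]
  · have hgoal : (fun x => (P {ω | x < (c/(d:ℝ)) * ∑ j ∈ Finset.range d, X j ω}).toReal)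
        = fun x => Td (σ x) := funext hfunS
    rw [hgoal]
    set T1 : ℝ → ℝ := fun x => (d:ℝ) * T (((d:ℝ)/c) * x) with hT1
    obtain ⟨hi1s, hS1⟩ := scale_conv hTA hp hint hS' hdpos hσpos
    have hA1 : Antitone T1 := fun u v huv => by
      simp only [hT1]
      exact mul_le_mul_of_nonneg_left (hTA (mul_le_mul_of_nonneg_left huv hσpos.le)) hdpos.le
    have hp1 : ∀ x, 0 < T1 x := fun x => mul_pos hdpos (hp _)
    have hA2 : Antitone (fun x => Td (σ x)) := fun u v huv =>
      hTdA (mul_le_mul_of_nonneg_left huv hσpos.le)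
    have hp2 : ∀ x, 0 < Td (σ x) := by
      intro x
      refine lt_of_lt_of_le (hp (σ x)) ?_
      refine pt_mono_event fun ω hω => ?_
      have hsum : X 0 ω ≤ ∑ j ∈ Finset.range d, X j ω :=
        Finset.single_le_sum (fun j _ => hpos j ω) (Finset.mem_range.2 hd)
      linarith [hω]
    have hrat : Tendsto (fun x => Td (σ x) / T1 x) atTop (nhds 1) := by
      have h := hmain.comp hσtop
      exact h.congr fun x => rfl
    obtain ⟨hi2, hconv2⟩ := closure_lemma hA1 hp1 hi1s hS1 hA2 hp2 hrat
    exact ⟨hp2, hi2, hconv2⟩
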